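/- Let T > 0, ε > 0 and let N be an integer with N > 1/ε. Let q ⊂ (0,1)×(0,T) be an open set whose ε-interior q^ε satisfies the geometric optics condition. Then the graph G_N(q) on the vertex set 𝕀_N, in which two distinct vertices a, b are adjacent if and only if w_{a,b}^N > 0, is connected. -/

import Mathlib

/-- The 2-periodic folding map `s(y) = |y - 2k|`, `k` the integer nearest to `y/2`. -/
noncomputable def fold (y : ℝ) : ℝ := |y - 2 * (round (y / 2) : ℝ)|

/-- A set `A ⊆ [0,1] × (0,T)` satisfies the geometric optics condition if every
characteristic line, reflected according to geometric optics, meets `A`. -/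
def GeoOptics (T : ℝ) (A : Set (ℝ × ℝ)) : Prop :=
  ∀ x0 ∈ Set.Icc (0 : ℝ) 1, ∀ σ : ℝ, (σ = 1 ∨ σ = -1) →
    ∃ t ∈ Set.Ioo (0 : ℝ) T, (fold (x0 + σ * t), t) ∈ A

/-- Euclidean distance on `ℝ × ℝ`. -/
noncomputable def eDist (X Y : ℝ × ℝ) : ℝ :=
  Real.sqrt ((X.1 - Y.1) ^ 2 + (X.2 - Y.2) ^ 2)

/-- The `ε`-interior of a set `q ⊆ ℝ²`: points of `q` at (Euclidean) distance `> ε`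
from the boundary of `q`. -/
def epsInterior (ε : ℝ) (q : Set (ℝ × ℝ)) : Set (ℝ × ℝ) :=
  {X | X ∈ q ∧ ∀ Y ∈ frontier q, ε < eDist X Y}
/-- The interval `I_i^N`: `[(i−1)/N, i/N]` for `i > 0`, `[i/N, (i+1)/N]` for `i < 0`. -/
noncomputable def Ii (N : ℕ) (i : ℤ) : Set ℝ :=
  if 0 < i then Set.Icc (((i : ℝ) - 1) / N) ((i : ℝ) / N)
  else Set.Icc ((i : ℝ) / N) (((i : ℝ) + 1) / N)

/-- The elementary square `C_{(i,j)}^N = {(x,t) : x+t ∈ I_i^N, x−t ∈ I_j^N}`. -/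
noncomputable def elemSq (N : ℕ) (i j : ℤ) : Set (ℝ × ℝ) :=
  {p | p.1 + p.2 ∈ Ii N i ∧ p.1 - p.2 ∈ Ii N j}
/-- The index map `𝔧_N` on positive integers. -/
def jmapPos (N : ℕ) (i : ℤ) : ℤ :=
  if (i - 1) % (2 * (N : ℤ)) < (N : ℤ) then (i - 1) % (2 * (N : ℤ)) + 1
  else (i - 1) % (2 * (N : ℤ)) - 2 * (N : ℤ)

/-- The index map `𝔧_N : ℤ∖{0} → 𝕀_N`, with `𝔧_N(i) = −𝔧_N(−i)` for `i < 0`. -/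
def jmap (N : ℕ) (i : ℤ) : ℤ := if 0 < i then jmapPos N i else -jmapPos N (-i)

/-- The index set `𝕀_N = {−N, …, −1, 1, …, N}`. -/
noncomputable def IN (N : ℕ) : Finset ℤ := (Finset.Icc (-(N : ℤ)) (N : ℤ)).erase 0
/-- Degree `d_a^N`: the number of squares `(i,j) ∈ 𝒞` with `a ∈ {𝔧_N(i), −𝔧_N(j)}`. -/
def degree (N : ℕ) (C : Finset (ℤ × ℤ)) (a : ℤ) : ℕ :=
  (C.filter fun ij => jmap N ij.1 = a ∨ -jmap N ij.2 = a).card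

/-- Weight `w_{a,b}^N`: the number of squares `(i,j) ∈ 𝒞` with `{a,b} = {𝔧_N(i), −𝔧_N(j)}`. -/
def weight (N : ℕ) (C : Finset (ℤ × ℤ)) (a b : ℤ) : ℕ :=
  (C.filter fun ij => ({jmap N ij.1, -jmap N ij.2} : Finset ℤ) = ({a, b} : Finset ℤ)).card

/-- The Laplacian matrix `A_N(q)`: diagonal entries `d_a^N`, off-diagonal entries `−w_{a,b}^N`. -/
def lapMat (N : ℕ) (C : Finset (ℤ × ℤ)) (a b : ℤ) : ℝ :=
  if a = b then (degree N C a : ℝ) else -((weight N C a b : ℝ))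

/-! ### auxiliary lemmas -/

def grel (N : ℕ) (C : Finset (ℤ × ℤ)) (u v : ℤ) : Prop :=
  u ∈ IN N ∧ v ∈ IN N ∧ u ≠ v ∧ 0 < weight N C u v

lemma grel_symm (N : ℕ) (C : Finset (ℤ × ℤ)) : Symmetric (grel N C) := by
  rintro u v ⟨h1, h2, h3, h4⟩
  refine ⟨h2, h1, h3.symm, ?_⟩
  unfold weight at h4 ⊢
  rw [Finset.pair_comm v u]
  exact h4

lemma jmapPos_period (N : ℕ) (i k : ℤ) : jmapPos N (i + 2 * N * k) = jmapPos N i := by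
  unfold jmapPos
  have h : (i + 2 * N * k - 1) % (2 * (N : ℤ)) = (i - 1) % (2 * (N : ℤ)) := by
    have e : i + 2 * N * k - 1 = (i - 1) + (2 * (N : ℤ)) * k := by ring
    rw [e, Int.add_mul_emod_self_left]
  rw [h]

lemma jmapPos_of_dvd (N : ℕ) {d r : ℤ} (h : (2 * (N : ℤ)) ∣ (d - r)) :
    jmapPos N d = jmapPos N r := by
  obtain ⟨k, hk⟩ := h
  have : d = r + 2 * N * k := by linarith
  rw [this, jmapPos_period]

lemma jmapPos_lo (N : ℕ) {r : ℤ} (h1 : 1 ≤ r) (h2 : r ≤ (N : ℤ)) : jmapPos N r = r := by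
  have h : (r - 1) % (2 * (N : ℤ)) = r - 1 := Int.emod_eq_of_lt (by omega) (by omega)
  unfold jmapPos
  rw [h, if_pos (by omega)]
  ring

lemma jmapPos_hi (N : ℕ) {r : ℤ} (h1 : (N : ℤ) < r) (h2 : r ≤ 2 * (N : ℤ)) :
    jmapPos N r = r - 1 - 2 * N := by
  have h : (r - 1) % (2 * (N : ℤ)) = r - 1 := Int.emod_eq_of_lt (by omega) (by omega)
  unfold jmapPos
  rw [h, if_neg (by omega)]

lemma mem_IN_iff (N : ℕ) (x : ℤ) : x ∈ IN N ↔ x ≠ 0 ∧ -(N : ℤ) ≤ x ∧ x ≤ N := by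
  simp [IN, Finset.mem_erase, Finset.mem_Icc, and_assoc]

lemma jmapPos_range (N : ℕ) (hN : 1 ≤ N) (i : ℤ) :
    (1 ≤ jmapPos N i ∧ jmapPos N i ≤ N) ∨ (-(N : ℤ) ≤ jmapPos N i ∧ jmapPos N i ≤ -1) := by
  have h2N : (0 : ℤ) < 2 * N := by positivity
  have h0 := Int.emod_nonneg (i - 1) (ne_of_gt h2N)
  have h1 := Int.emod_lt_of_pos (i - 1) h2N
  unfold jmapPos
  split <;> omega

lemma jmap_mem_IN (N : ℕ) (hN : 1 ≤ N) (i : ℤ) : jmap N i ∈ IN N := by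
  have h := jmapPos_range N hN i
  have h' := jmapPos_range N hN (-i)
  rw [mem_IN_iff]
  unfold jmap
  split <;> omega

lemma neg_jmap_mem_IN (N : ℕ) (hN : 1 ≤ N) (j : ℤ) : -jmap N j ∈ IN N := by
  have h := jmap_mem_IN N hN j
  rw [mem_IN_iff] at h ⊢
  omega

/-! ### geometry -/

lemma mem_Ii_diam {N : ℕ} (hN : 0 < (N : ℝ)) {i : ℤ} {a b : ℝ}
    (ha : a ∈ Ii N i) (hb : b ∈ Ii N i) : |a - b| ≤ 1 / N := by
  unfold Ii at ha hb
  split at ha <;> rename_i h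
  · rw [if_pos h] at hb
    obtain ⟨ha1, ha2⟩ := ha; obtain ⟨hb1, hb2⟩ := hb
    have e : (i : ℝ) / N - ((i : ℝ) - 1) / N = 1 / N := by field_simp; ring
    rw [abs_sub_le_iff]
    constructor <;> linarith
  · rw [if_neg h] at hb
    obtain ⟨ha1, ha2⟩ := ha; obtain ⟨hb1, hb2⟩ := hb
    have e : ((i : ℝ) + 1) / N - (i : ℝ) / N = 1 / N := by field_simp; ring
    rw [abs_sub_le_iff]
    constructor <;> linarith

lemma exists_mem_Ii {N : ℕ} (hN : 0 < (N : ℝ)) (v : ℝ) : ∃ j : ℤ, j ≠ 0 ∧ v ∈ Ii N j := by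
  have h1 : ((⌊v * N⌋ : ℤ) : ℝ) ≤ v * N := Int.floor_le _
  have h2 : v * N < (⌊v * N⌋ : ℤ) + 1 := Int.lt_floor_add_one _
  by_cases h : 0 ≤ ⌊v * N⌋
  · refine ⟨⌊v * N⌋ + 1, by omega, ?_⟩
    unfold Ii
    rw [if_pos (by omega)]
    constructor
    · rw [div_le_iff₀ hN]; push_cast; linarith
    · rw [le_div_iff₀ hN]; push_cast; linarith
  · refine ⟨⌊v * N⌋, by omega, ?_⟩
    unfold Ii
    rw [if_neg (by omega)]
    constructor
    · rw [div_le_iff₀ hN]; linarith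
    · rw [le_div_iff₀ hN]; push_cast; linarith

lemma eDist_le {P W : ℝ × ℝ} {r : ℝ} (hr : 0 ≤ r)
    (h1 : |P.1 + P.2 - (W.1 + W.2)| ≤ r) (h2 : |P.1 - P.2 - (W.1 - W.2)| ≤ r) :
    eDist P W ≤ r := by
  have a1 := abs_le.mp h1
  have a2 := abs_le.mp h2
  have key : (P.1 - W.1) ^ 2 + (P.2 - W.2) ^ 2 ≤ r ^ 2 := by nlinarith
  calc eDist P W ≤ Real.sqrt (r ^ 2) := Real.sqrt_le_sqrt key
    _ = r := Real.sqrt_sq hr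

lemma epsInt_ball {q : Set (ℝ × ℝ)} (hq : IsOpen q) {ε : ℝ} {P : ℝ × ℝ}
    (hP : P ∈ epsInterior ε q) {W : ℝ × ℝ} (hW : eDist P W < ε) : W ∈ q := by
  by_contra hWq
  have hconn : IsPreconnected (segment ℝ P W) := (convex_segment P W).isPreconnected
  have hsub : segment ℝ P W ⊆ q ∪ (closure q)ᶜ := by
    intro Y hY
    by_contra hY'
    have hY1 : Y ∉ q := fun h => hY' (Or.inl h)
    have hY2 : Y ∈ closure q := by
      by_contra h
      exact hY' (Or.inr h)
    have hfr : Y ∈ frontier q := ⟨hY2, by rwa [hq.interior_eq]⟩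
    have hlt := hP.2 Y hfr
    -- but eDist P Y ≤ eDist P W < ε
    obtain ⟨a, b, ha, hb, hab, hYe⟩ := hY
    have hY1e : Y.1 = a * P.1 + b * W.1 := by rw [← hYe]; rfl
    have hY2e : Y.2 = a * P.2 + b * W.2 := by rw [← hYe]; rfl
    have e1 : P.1 - Y.1 = b * (P.1 - W.1) := by rw [hY1e]; linear_combination (-P.1) * hab
    have e2 : P.2 - Y.2 = b * (P.2 - W.2) := by rw [hY2e]; linear_combination (-P.2) * hab
    have hEd : eDist P Y = b * eDist P W := by
      unfold eDist
      rw [e1, e2, show (b * (P.1 - W.1)) ^ 2 + (b * (P.2 - W.2)) ^ 2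
        = b ^ 2 * ((P.1 - W.1) ^ 2 + (P.2 - W.2) ^ 2) by ring,
        Real.sqrt_mul (sq_nonneg b), Real.sqrt_sq hb]
    have hnn : 0 ≤ eDist P W := Real.sqrt_nonneg _
    nlinarith [hlt, hEd, hW]
  rcases hconn.subset_or_subset hq isClosed_closure.isOpen_compl
      (disjoint_compl_right.mono_left subset_closure) hsub with h | h
  · exact hWq (h (right_mem_segment ℝ P W))
  · exact (h (left_mem_segment ℝ P W)) (subset_closure hP.1)

section Main

variable {T ε : ℝ} {N : ℕ} {q : Set (ℝ × ℝ)} {C : Finset (ℤ × ℤ)}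

lemma sq_mem (hq : IsOpen q) (hNpos : 0 < (N : ℝ)) (hNe : 1 / (N : ℝ) < ε)
    (hC : ∀ ij : ℤ × ℤ, ij ∈ C ↔
      (ij.1 ≠ 0 ∧ ij.2 ≠ 0 ∧ interior (elemSq N ij.1 ij.2) ⊆ q))
    {P : ℝ × ℝ} (hP : P ∈ epsInterior ε q) {i j : ℤ} (hi : i ≠ 0) (hj : j ≠ 0)
    (hu : P.1 + P.2 ∈ Ii N i) (hv : P.1 - P.2 ∈ Ii N j) : (i, j) ∈ C := by
  rw [hC]
  refine ⟨hi, hj, ?_⟩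
  intro W hW
  obtain ⟨hWu, hWv⟩ := interior_subset hW
  apply epsInt_ball hq hP
  calc eDist P W ≤ 1 / N :=
      eDist_le (by positivity) (mem_Ii_diam hNpos hu hWu) (mem_Ii_diam hNpos hv hWv)
    _ < ε := hNe

lemma weight_pos {i j x y : ℤ} (h : (i, j) ∈ C)
    (hxy : ({jmap N i, -jmap N j} : Finset ℤ) = ({x, y} : Finset ℤ)) :
    0 < weight N C x y := by
  unfold weight
  exact Finset.card_pos.mpr ⟨(i, j), Finset.mem_filter.mpr ⟨h, hxy⟩⟩

lemma conn_shared_j (hN : 1 ≤ N) {i i' j : ℤ} (h : (i, j) ∈ C) (h' : (i', j) ∈ C) :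
    Relation.ReflTransGen (grel N C) (jmap N i) (jmap N i') := by
  set a := jmap N i with ha
  set a' := jmap N i' with ha'
  set b := -jmap N j with hb
  have hma : a ∈ IN N := jmap_mem_IN N hN i
  have hma' : a' ∈ IN N := jmap_mem_IN N hN i'
  have hmb : b ∈ IN N := neg_jmap_mem_IN N hN j
  by_cases haa' : a = a'
  · rw [haa']
  by_cases hab : a = b
  · -- edge a' ~ b = a  from square (i',j)
    exact Relation.ReflTransGen.single
      ⟨hma, hma', haa', weight_pos h' (by rw [← ha', ← hb, ← hab, Finset.pair_comm])⟩
  by_cases ha'b : a' = b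
  · exact Relation.ReflTransGen.single
      ⟨hma, hma', haa', weight_pos h (by rw [← ha, ← hb, ← ha'b])⟩
  · refine Relation.ReflTransGen.tail (Relation.ReflTransGen.single
      (⟨hma, hmb, hab, weight_pos h (by rw [← ha, ← hb])⟩ : grel N C a b)) ?_
    exact ⟨hmb, hma', fun hh => ha'b hh.symm,
      weight_pos h' (by rw [← ha', ← hb, Finset.pair_comm])⟩

lemma conn_shared_i (hN : 1 ≤ N) {i j j' : ℤ} (h : (i, j) ∈ C) (h' : (i, j') ∈ C) :
    Relation.ReflTransGen (grel N C) (-jmap N j) (-jmap N j') := by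
  set a := -jmap N j with ha
  set a' := -jmap N j' with ha'
  set b := jmap N i with hb
  have hma : a ∈ IN N := neg_jmap_mem_IN N hN j
  have hma' : a' ∈ IN N := neg_jmap_mem_IN N hN j'
  have hmb : b ∈ IN N := jmap_mem_IN N hN i
  by_cases haa' : a = a'
  · rw [haa']
  by_cases hab : a = b
  · exact Relation.ReflTransGen.single
      ⟨hma, hma', haa', weight_pos h' (by rw [← ha', ← hb, ← hab, Finset.pair_comm])⟩
  by_cases ha'b : a' = b
  · exact Relation.ReflTransGen.single
      ⟨hma, hma', haa', weight_pos h (by rw [← ha, ← hb, ← ha'b, Finset.pair_comm])⟩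
  · refine Relation.ReflTransGen.tail (Relation.ReflTransGen.single
      (⟨hma, hmb, hab, weight_pos h (by rw [← ha, ← hb, Finset.pair_comm])⟩ : grel N C a b)) ?_
    exact ⟨hmb, hma', fun hh => ha'b hh.symm, weight_pos h' (by rw [← ha', ← hb])⟩


lemma ddiv {c : ℝ} (hc : 0 < c) {a b : ℝ} (h : a ≤ b) : a / c ≤ b / c := by gcongr

lemma grid_conn_u (hq : IsOpen q) (hN1 : 1 ≤ N) (hNpos : 0 < (N : ℝ)) (hNe : 1 / (N : ℝ) < ε)
    (hC : ∀ ij : ℤ × ℤ, ij ∈ C ↔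
      (ij.1 ≠ 0 ∧ ij.2 ≠ 0 ∧ interior (elemSq N ij.1 ij.2) ⊆ q))
    {p t : ℝ} (hP : (p, t) ∈ epsInterior ε q) (ht : 0 < t) (hp : 0 ≤ p)
    {c : ℤ} (hc : p + t = (c : ℝ) / N) :
    ∃ d : ℤ, (2 * (N : ℤ)) ∣ (d - c) ∧
      Relation.ReflTransGen (grel N C) (jmapPos N d) (jmapPos N (d + 1)) := by
  have hcpos : 1 ≤ c := by
    have h1 : (0 : ℝ) < (c : ℝ) / N := by rw [← hc]; linarith
    have h2 : (0 : ℝ) < (c : ℝ) := by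
      have h3 := mul_pos h1 hNpos
      rwa [div_mul_cancel₀ _ (ne_of_gt hNpos)] at h3
    exact_mod_cast h2
  have hu1 : p + t ∈ Ii N c := by
    unfold Ii
    rw [if_pos (by omega), Set.mem_Icc, hc]
    exact ⟨ddiv hNpos (by linarith), le_refl _⟩
  have hu2 : p + t ∈ Ii N (c + 1) := by
    unfold Ii
    rw [if_pos (by omega), Set.mem_Icc, hc]
    push_cast
    constructor
    · apply ddiv hNpos; linarith
    · apply ddiv hNpos; linarith
  obtain ⟨j, hj0, hjv⟩ := exists_mem_Ii hNpos (p - t)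
  have h1 : (c, j) ∈ C := sq_mem hq hNpos hNe hC hP (by omega) hj0 hu1 hjv
  have h2 : (c + 1, j) ∈ C := sq_mem hq hNpos hNe hC hP (by omega) hj0 hu2 hjv
  have hcn := conn_shared_j hN1 h1 h2
  have e1 : jmap N c = jmapPos N c := by unfold jmap; rw [if_pos (by omega)]
  have e2 : jmap N (c + 1) = jmapPos N (c + 1) := by unfold jmap; rw [if_pos (by omega)]
  rw [e1, e2] at hcn
  exact ⟨c, ⟨0, by ring⟩, hcn⟩

lemma grid_conn_v (hq : IsOpen q) (hN1 : 1 ≤ N) (hNpos : 0 < (N : ℝ)) (hNe : 1 / (N : ℝ) < ε)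
    (hC : ∀ ij : ℤ × ℤ, ij ∈ C ↔
      (ij.1 ≠ 0 ∧ ij.2 ≠ 0 ∧ interior (elemSq N ij.1 ij.2) ⊆ q))
    {p t : ℝ} (hP : (p, t) ∈ epsInterior ε q)
    {c : ℤ} (hc : p - t = (c : ℝ) / N) :
    ∃ sgn d : ℤ, (sgn = 1 ∨ sgn = -1) ∧ (2 * (N : ℤ)) ∣ (sgn * d + c) ∧
      Relation.ReflTransGen (grel N C) (sgn * jmapPos N d) (sgn * jmapPos N (d + 1)) := by
  have hN1' : (1 : ℤ) ≤ (N : ℤ) := by exact_mod_cast hN1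
  obtain ⟨i, hi0, hiu⟩ := exists_mem_Ii hNpos (p + t)
  rcases lt_trichotomy c 0 with hcn | rfl | hcp
  · -- c < 0
    have hv1 : p - t ∈ Ii N c := by
      unfold Ii
      rw [if_neg (by omega), Set.mem_Icc, hc]
      refine ⟨le_refl _, ddiv hNpos ?_⟩
      push_cast; linarith
    have hv2 : p - t ∈ Ii N (c - 1) := by
      unfold Ii
      rw [if_neg (by omega), Set.mem_Icc, hc]
      push_cast
      refine ⟨ddiv hNpos (by linarith), ?_⟩
      have : (c : ℝ) - 1 + 1 = (c : ℝ) := by ring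
      rw [this]
    have h1 : (i, c) ∈ C := sq_mem hq hNpos hNe hC hP hi0 (by omega) hiu hv1
    have h2 : (i, c - 1) ∈ C := sq_mem hq hNpos hNe hC hP hi0 (by omega) hiu hv2
    have hcn2 := conn_shared_i hN1 h1 h2
    have e1 : -jmap N c = jmapPos N (-c) := by
      unfold jmap; rw [if_neg (by omega)]; ring_nf
    have e2 : -jmap N (c - 1) = jmapPos N (-c + 1) := by
      unfold jmap
      rw [if_neg (by omega), show -(c - 1) = -c + 1 from by ring]
      ring_nf
    rw [e1, e2] at hcn2
    refine ⟨1, -c, Or.inl rfl, ⟨0, by ring⟩, ?_⟩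
    rw [one_mul, one_mul]
    exact hcn2
  · -- c = 0
    have hc0 : p - t = 0 := by rw [hc]; norm_num
    have hv1 : p - t ∈ Ii N 1 := by
      unfold Ii
      rw [if_pos (by omega), Set.mem_Icc, hc0]
      constructor
      · push_cast; norm_num
      · positivity
    have hv2 : p - t ∈ Ii N (-1) := by
      unfold Ii
      rw [if_neg (by omega), Set.mem_Icc, hc0]
      constructor
      · push_cast
        rw [neg_div, neg_nonpos]
        positivity
      · push_cast; norm_num
    have h1 : (i, 1) ∈ C := sq_mem hq hNpos hNe hC hP hi0 (by omega) hiu hv1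
    have h2 : (i, -1) ∈ C := sq_mem hq hNpos hNe hC hP hi0 (by omega) hiu hv2
    have hcn2 := conn_shared_i hN1 h1 h2
    have e1 : -jmap N 1 = -1 := by
      unfold jmap; rw [if_pos (by omega), jmapPos_lo N le_rfl hN1']
    have e2 : -jmap N (-1) = 1 := by
      unfold jmap
      rw [if_neg (by omega)]
      norm_num
      exact jmapPos_lo N le_rfl hN1'
    rw [e1, e2] at hcn2
    have v1 : jmapPos N (2 * (N : ℤ)) = -1 := by
      rw [jmapPos_hi N (by omega) (by omega)]; ring
    have v2 : jmapPos N (2 * (N : ℤ) + 1) = 1 := by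
      rw [jmapPos_of_dvd N (r := 1) ⟨1, by ring⟩, jmapPos_lo N le_rfl hN1']
    refine ⟨1, 2 * (N : ℤ), Or.inl rfl, ⟨1, by ring⟩, ?_⟩
    rw [one_mul, one_mul, v1, v2]
    exact hcn2
  · -- 0 < c
    have hv1 : p - t ∈ Ii N c := by
      unfold Ii
      rw [if_pos (by omega), Set.mem_Icc, hc]
      exact ⟨ddiv hNpos (by linarith), le_refl _⟩
    have hv2 : p - t ∈ Ii N (c + 1) := by
      unfold Ii
      rw [if_pos (by omega), Set.mem_Icc, hc]
      push_cast
      exact ⟨ddiv hNpos (by linarith), ddiv hNpos (by linarith)⟩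
    have h1 : (i, c) ∈ C := sq_mem hq hNpos hNe hC hP hi0 (by omega) hiu hv1
    have h2 : (i, c + 1) ∈ C := sq_mem hq hNpos hNe hC hP hi0 (by omega) hiu hv2
    have hcn2 := conn_shared_i hN1 h1 h2
    have e1 : -jmap N c = -1 * jmapPos N c := by
      unfold jmap; rw [if_pos (by omega)]; ring
    have e2 : -jmap N (c + 1) = -1 * jmapPos N (c + 1) := by
      unfold jmap; rw [if_pos (by omega)]; ring
    rw [e1, e2] at hcn2
    exact ⟨-1, c, Or.inr rfl, ⟨0, by ring⟩, hcn2⟩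


lemma char_conn (hq : IsOpen q) (hN1 : 1 ≤ N) (hNpos : 0 < (N : ℝ)) (hNe : 1 / (N : ℝ) < ε)
    (hC : ∀ ij : ℤ × ℤ, ij ∈ C ↔
      (ij.1 ≠ 0 ∧ ij.2 ≠ 0 ∧ interior (elemSq N ij.1 ij.2) ⊆ q))
    {T : ℝ} (hgoc : GeoOptics T (epsInterior ε q))
    {m : ℤ} (hm0 : 0 ≤ m) (hmN : m ≤ (N : ℤ)) (σi : ℤ) (hσi : σi = 1 ∨ σi = -1) :
    ∃ sgn d : ℤ, (sgn = 1 ∨ sgn = -1) ∧ (2 * (N : ℤ)) ∣ (sgn * d + σi * m) ∧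
      Relation.ReflTransGen (grel N C) (sgn * jmapPos N d) (sgn * jmapPos N (d + 1)) := by
  have hNne : (N : ℝ) ≠ 0 := ne_of_gt hNpos
  have hx0 : (m : ℝ) / N ∈ Set.Icc (0 : ℝ) 1 := by
    constructor
    · apply div_nonneg _ (le_of_lt hNpos)
      exact_mod_cast hm0
    · rw [div_le_one hNpos]
      exact_mod_cast hmN
  have hσR : ((σi : ℝ) = 1 ∨ (σi : ℝ) = -1) := by
    rcases hσi with rfl | rfl <;> [left; right] <;> norm_num
  obtain ⟨t, ht, hmem⟩ := hgoc ((m : ℝ) / N) hx0 (σi : ℝ) hσR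
  set y : ℝ := (m : ℝ) / N + (σi : ℝ) * t with hy
  set k : ℤ := round (y / 2) with hk
  set p : ℝ := fold y with hpdef
  have hp : 0 ≤ p := abs_nonneg _
  have hP : (p, t) ∈ epsInterior ε q := hmem
  have ht0 : 0 < t := ht.1
  rcases abs_cases (y - 2 * (k : ℝ)) with ⟨he, _⟩ | ⟨he, _⟩ <;>
    rcases hσi with rfl | rfl
  · -- p = y - 2k, σ = 1 :  p - t = (m - 2kN)/N
    have hc : p - t = ((m - 2 * k * N : ℤ) : ℝ) / N := by
      rw [hpdef, fold, ← hk, he, hy]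
      push_cast
      field_simp
      ring
    obtain ⟨sgn, d, hsgn, hdvd, hconn⟩ := grid_conn_v hq hN1 hNpos hNe hC hP hc
    refine ⟨sgn, d, hsgn, ?_, hconn⟩
    obtain ⟨e, hee⟩ := hdvd
    exact ⟨e + k, by push_cast at hee ⊢; linear_combination hee⟩
  · -- p = y - 2k, σ = -1 : p + t = (m - 2kN)/N
    have hc : p + t = ((m - 2 * k * N : ℤ) : ℝ) / N := by
      rw [hpdef, fold, ← hk, he, hy]
      push_cast
      field_simp
      ring
    obtain ⟨d, hdvd, hconn⟩ := grid_conn_u hq hN1 hNpos hNe hC hP ht0 hp hc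
    refine ⟨1, d, Or.inl rfl, ?_, ?_⟩
    · obtain ⟨e, hee⟩ := hdvd
      exact ⟨e - k, by push_cast at hee ⊢; linear_combination hee⟩
    · rw [one_mul, one_mul]
      exact hconn
  · -- p = 2k - y, σ = 1 : p + t = (2kN - m)/N
    have hc : p + t = ((2 * k * N - m : ℤ) : ℝ) / N := by
      rw [hpdef, fold, ← hk, he, hy]
      push_cast
      field_simp
      ring
    obtain ⟨d, hdvd, hconn⟩ := grid_conn_u hq hN1 hNpos hNe hC hP ht0 hp hc
    refine ⟨1, d, Or.inl rfl, ?_, ?_⟩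
    · obtain ⟨e, hee⟩ := hdvd
      exact ⟨e + k, by push_cast at hee ⊢; linear_combination hee⟩
    · rw [one_mul, one_mul]
      exact hconn
  · -- p = 2k - y, σ = -1 : p - t = (2kN - m)/N
    have hc : p - t = ((2 * k * N - m : ℤ) : ℝ) / N := by
      rw [hpdef, fold, ← hk, he, hy]
      push_cast
      field_simp
      ring
    obtain ⟨sgn, d, hsgn, hdvd, hconn⟩ := grid_conn_v hq hN1 hNpos hNe hC hP hc
    refine ⟨sgn, d, hsgn, ?_, hconn⟩
    obtain ⟨e, hee⟩ := hdvd
    exact ⟨e - k, by push_cast at hee ⊢; linear_combination hee⟩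

end Main

lemma eval_pair_pos (N : ℕ) {d m : ℤ} (hm1 : 1 ≤ m) (hm2 : m ≤ (N : ℤ) - 1)
    (hdvd : 2 * (N : ℤ) ∣ (d - m)) : jmapPos N d = m ∧ jmapPos N (d + 1) = m + 1 := by
  constructor
  · rw [jmapPos_of_dvd N hdvd, jmapPos_lo N hm1 (by omega)]
  · rw [jmapPos_of_dvd N (r := m + 1)
      (by rw [show d + 1 - (m + 1) = d - m from by ring]; exact hdvd),
      jmapPos_lo N (by omega) (by omega)]

lemma eval_pair_neg (N : ℕ) {d m : ℤ} (hm1 : 1 ≤ m) (hm2 : m ≤ (N : ℤ) - 1)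
    (hdvd : 2 * (N : ℤ) ∣ (d + m)) : jmapPos N d = -m - 1 ∧ jmapPos N (d + 1) = -m := by
  obtain ⟨e, he⟩ := hdvd
  constructor
  · rw [jmapPos_of_dvd N (r := 2 * N - m) ⟨e - 1, by linarith⟩,
      jmapPos_hi N (by omega) (by omega)]
    ring
  · rw [jmapPos_of_dvd N (r := 2 * N - m + 1) ⟨e - 1, by linarith⟩,
      jmapPos_hi N (by omega) (by omega)]
    ring

lemma eval_pair_zero (N : ℕ) (hN1 : 1 ≤ N) {d : ℤ}
    (hdvd : 2 * (N : ℤ) ∣ d) : jmapPos N d = -1 ∧ jmapPos N (d + 1) = 1 := by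
  obtain ⟨e, he⟩ := hdvd
  have hN1' : (1 : ℤ) ≤ (N : ℤ) := by exact_mod_cast hN1
  constructor
  · rw [jmapPos_of_dvd N (r := 2 * N) ⟨e - 1, by linarith⟩,
      jmapPos_hi N (by omega) (by omega)]
    ring
  · rw [jmapPos_of_dvd N (r := 1) ⟨e, by linarith⟩, jmapPos_lo N le_rfl hN1']

/-- Lemma 2.9: if the `ε`-interior of `q` satisfies the geometric
optics condition and `N > 1/ε`, then the graph `G_N(q)` on the vertex set `𝕀_N`, with
`a ∼ b` iff `w_{a,b}^N > 0`, is connected: any two vertices are joined by a path. -/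
theorem graph_connected (T ε : ℝ) (hT : 0 < T) (hε : 0 < ε)
    (N : ℕ) (hN : 1 / ε < (N : ℝ))
    (q : Set (ℝ × ℝ)) (hq : IsOpen q)
    (hsub : q ⊆ Set.Ioo (0 : ℝ) 1 ×ˢ Set.Ioo (0 : ℝ) T)
    (hgoc : GeoOptics T (epsInterior ε q))
    (C : Finset (ℤ × ℤ))
    (hC : ∀ ij : ℤ × ℤ, ij ∈ C ↔
      (ij.1 ≠ 0 ∧ ij.2 ≠ 0 ∧ interior (elemSq N ij.1 ij.2) ⊆ q)) :
    ∀ a ∈ IN N, ∀ b ∈ IN N,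
      Relation.ReflTransGen
        (fun u v => u ∈ IN N ∧ v ∈ IN N ∧ u ≠ v ∧ 0 < weight N C u v) a b := by
  have hN0 : (0 : ℝ) < N := lt_trans (by positivity) hN
  have hN1 : 1 ≤ N := by
    have : 0 < N := by exact_mod_cast hN0
    omega
  have hNe : 1 / (N : ℝ) < ε := by
    rw [div_lt_iff₀ hN0]
    have := (div_lt_iff₀ hε).mp hN
    linarith
  have hsymm : ∀ {a b : ℤ}, Relation.ReflTransGen (grel N C) a b →
      Relation.ReflTransGen (grel N C) b a := fun h => by
    induction h with
    | refl => exact Relation.ReflTransGen.refl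
    | tail _ hbc ih => exact Relation.ReflTransGen.head (grel_symm N C hbc) ih
  -- the three elementary connections
  have hpos : ∀ m : ℤ, 1 ≤ m → m ≤ (N : ℤ) - 1 →
      Relation.ReflTransGen (grel N C) m (m + 1) := by
    intro m h1 h2
    obtain ⟨sgn, d, hsgn, hdvd, hconn⟩ :=
      char_conn (m := m) hq hN1 hN0 hNe hC hgoc (by omega) (by omega) (-1) (Or.inr rfl)
    rcases hsgn with rfl | rfl
    · have hdvd' : 2 * (N : ℤ) ∣ (d - m) := by
        obtain ⟨e, he⟩ := hdvd; exact ⟨e, by linarith⟩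
      obtain ⟨v1, v2⟩ := eval_pair_pos N h1 h2 hdvd'
      rw [v1, v2, one_mul, one_mul] at hconn
      exact hconn
    · have hdvd' : 2 * (N : ℤ) ∣ (d + m) := by
        obtain ⟨e, he⟩ := hdvd; exact ⟨-e, by linarith⟩
      obtain ⟨v1, v2⟩ := eval_pair_neg N h1 h2 hdvd'
      rw [v1, v2, show (-1 : ℤ) * (-m - 1) = m + 1 from by ring,
        show (-1 : ℤ) * (-m) = m from by ring] at hconn
      exact hsymm hconn
  have hneg : ∀ m : ℤ, 1 ≤ m → m ≤ (N : ℤ) - 1 →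
      Relation.ReflTransGen (grel N C) (-m) (-(m + 1)) := by
    intro m h1 h2
    obtain ⟨sgn, d, hsgn, hdvd, hconn⟩ :=
      char_conn (m := m) hq hN1 hN0 hNe hC hgoc (by omega) (by omega) 1 (Or.inl rfl)
    rcases hsgn with rfl | rfl
    · have hdvd' : 2 * (N : ℤ) ∣ (d + m) := by
        obtain ⟨e, he⟩ := hdvd; exact ⟨e, by linarith⟩
      obtain ⟨v1, v2⟩ := eval_pair_neg N h1 h2 hdvd'
      rw [v1, v2, one_mul, one_mul] at hconn
      rw [show -(m + 1) = -m - 1 from by ring]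
      exact hsymm hconn
    · have hdvd' : 2 * (N : ℤ) ∣ (d - m) := by
        obtain ⟨e, he⟩ := hdvd; exact ⟨-e, by linarith⟩
      obtain ⟨v1, v2⟩ := eval_pair_pos N h1 h2 hdvd'
      rw [v1, v2, show (-1 : ℤ) * m = -m from by ring,
        show (-1 : ℤ) * (m + 1) = -(m + 1) from by ring] at hconn
      exact hconn
  have hzero : Relation.ReflTransGen (grel N C) 1 (-1) := by
    obtain ⟨sgn, d, hsgn, hdvd, hconn⟩ :=
      char_conn hq hN1 hN0 hNe hC hgoc (m := 0) le_rfl (by omega) 1 (Or.inl rfl)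
    rcases hsgn with rfl | rfl
    · have hdvd' : 2 * (N : ℤ) ∣ d := by
        obtain ⟨e, he⟩ := hdvd; exact ⟨e, by linarith⟩
      obtain ⟨v1, v2⟩ := eval_pair_zero N hN1 hdvd'
      rw [v1, v2, one_mul, one_mul] at hconn
      exact hsymm hconn
    · have hdvd' : 2 * (N : ℤ) ∣ d := by
        obtain ⟨e, he⟩ := hdvd; exact ⟨-e, by linarith⟩
      obtain ⟨v1, v2⟩ := eval_pair_zero N hN1 hdvd'
      rw [v1, v2, show (-1 : ℤ) * (-1) = 1 from by ring,
        show (-1 : ℤ) * 1 = -1 from by ring] at hconn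
      exact hconn
  -- chains to 1 and -1
  have hchain_pos : ∀ n : ℕ, ((n : ℤ) + 1 ≤ (N : ℤ)) →
      Relation.ReflTransGen (grel N C) ((n : ℤ) + 1) 1 := by
    intro n
    induction n with
    | zero =>
      intro _
      rw [show ((0 : ℕ) : ℤ) + 1 = 1 from by norm_num]
    | succ kk ih =>
      intro hle
      push_cast at hle
      have h1 := ih (by omega)
      have h2 := hpos ((kk : ℤ) + 1) (by omega) (by omega)
      have e : ((kk + 1 : ℕ) : ℤ) + 1 = ((kk : ℤ) + 1) + 1 := by push_cast; ring
      rw [e]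
      exact (hsymm h2).trans h1
  have hchain_neg : ∀ n : ℕ, ((n : ℤ) + 1 ≤ (N : ℤ)) →
      Relation.ReflTransGen (grel N C) (-((n : ℤ) + 1)) (-1) := by
    intro n
    induction n with
    | zero =>
      intro _
      rw [show -(((0 : ℕ) : ℤ) + 1) = -1 from by norm_num]
    | succ kk ih =>
      intro hle
      push_cast at hle
      have h1 := ih (by omega)
      have h2 := hneg ((kk : ℤ) + 1) (by omega) (by omega)
      have e : -(((kk + 1 : ℕ) : ℤ) + 1) = -(((kk : ℤ) + 1) + 1) := by push_cast; ring
      rw [e]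
      exact (hsymm h2).trans h1
  have hto1 : ∀ a ∈ IN N, Relation.ReflTransGen (grel N C) a 1 := by
    intro a ha
    rw [mem_IN_iff] at ha
    obtain ⟨ha0, ha1, ha2⟩ := ha
    rcases lt_or_gt_of_ne ha0 with h | h
    · obtain ⟨n, hn⟩ : ∃ n : ℕ, (n : ℤ) + 1 = -a := ⟨(-a - 1).toNat, by omega⟩
      have hcn := hchain_neg n (by omega)
      rw [hn, neg_neg] at hcn
      exact hcn.trans (hsymm hzero)
    · obtain ⟨n, hn⟩ : ∃ n : ℕ, (n : ℤ) + 1 = a := ⟨(a - 1).toNat, by omega⟩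
      have hcn := hchain_pos n (by omega)
      rwa [hn] at hcn
  intro a ha b hb
  exact (hto1 a ha).trans (hsymm (hto1 b hb))
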